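/- Let X_1, X_2, X_3 be pairwise disjoint finite sets of cardinalities n_1, n_2, n_3 ≥ 1. The number of triples (f, g, h) with f : X_1 → X_2, g : X_2 → X_3, h : X_3 → X_1 such that some iterate (h ∘ g ∘ f)^m : X_1 → X_1 is a constant map equals n_1^{n_3−1} · n_2^{n_1−1} · n_3^{n_2−1} · (n_1 n_2 + n_2 n_3 + n_3 n_1 − (n_1 + n_2 + n_3) + 1). -/
import Mathlib


set_option linter.unusedSectionVars false

open Function

namespace Stmt19

attribute [local instance] Classical.propDecidable

variable {A : Type*}

def IsCyc (σ : A → A) (x : A) : Prop := ∃ m, 1 ≤ m ∧ σ^[m] x = x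

lemma IsCyc.apply {σ : A → A} {x : A} (h : IsCyc σ x) : IsCyc σ (σ x) := by
  obtain ⟨m, hm, hx⟩ := h
  exact ⟨m, hm, by rw [← Function.iterate_succ_apply, Function.iterate_succ_apply', hx]⟩

lemma IsCyc.exists_ge {σ : A → A} {x : A} (h : IsCyc σ x) (N : ℕ) :
    ∃ M, N ≤ M ∧ 1 ≤ M ∧ σ^[M] x = x := by
  obtain ⟨m, hm, hx⟩ := h
  refine ⟨m * (N + 1), ?_, ?_, ?_⟩
  · calc N ≤ N + 1 := Nat.le_succ N
      _ = 1 * (N + 1) := (one_mul _).symm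
      _ ≤ m * (N + 1) := Nat.mul_le_mul_right _ hm
  · exact Nat.one_le_iff_ne_zero.2 (Nat.mul_ne_zero (by omega) (by omega))
  · rw [Function.iterate_mul]
    exact Function.iterate_fixed hx _

lemma IsCyc.common {σ : A → A} {x y : A} (hx : IsCyc σ x) (hy : IsCyc σ y) :
    ∃ M, 1 ≤ M ∧ σ^[M] x = x ∧ σ^[M] y = y := by
  obtain ⟨m, hm, hmx⟩ := hx
  obtain ⟨n, hn, hny⟩ := hy
  refine ⟨m * n, Nat.one_le_iff_ne_zero.2 (Nat.mul_ne_zero (by omega) (by omega)), ?_, ?_⟩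
  · rw [Function.iterate_mul]; exact Function.iterate_fixed hmx _
  · rw [mul_comm, Function.iterate_mul]; exact Function.iterate_fixed hny _

lemma IsCyc.eq_of_apply_eq {σ : A → A} {x a : A} (h : IsCyc σ x) (ha : σ a = a)
    (hxa : σ x = a) : x = a := by
  obtain ⟨M, hM, hMx⟩ := h
  have : σ^[M] x = σ^[M - 1] (σ x) := by
    rw [← Function.iterate_succ_apply, Nat.succ_eq_add_one, Nat.sub_add_cancel hM]
  rw [this, hxa, Function.iterate_fixed ha] at hMx
  exact hMx.symm

lemma isCyc_injOn {σ : A → A} {x y : A} (hx : IsCyc σ x) (hy : IsCyc σ y)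
    (hxy : σ x = σ y) : x = y := by
  obtain ⟨M, hM, hMx, hMy⟩ := hx.common hy
  have hx' : σ^[M - 1] (σ x) = x := by
    rw [← Function.iterate_succ_apply, Nat.succ_eq_add_one, Nat.sub_add_cancel hM]; exact hMx
  have hy' : σ^[M - 1] (σ y) = y := by
    rw [← Function.iterate_succ_apply, Nat.succ_eq_add_one, Nat.sub_add_cancel hM]; exact hMy
  rw [← hx', hxy, hy']

lemma exists_lt_iterate_eq [Fintype A] (σ : A → A) (x : A) :
    ∃ i j, i < j ∧ j ≤ Fintype.card A ∧ σ^[i] x = σ^[j] x := by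
  have hlt : Fintype.card A < Fintype.card (Fin (Fintype.card A + 1)) := by simp
  obtain ⟨i, j, hne, h⟩ :=
    Fintype.exists_ne_map_eq_of_card_lt (fun i : Fin (Fintype.card A + 1) => σ^[(i : ℕ)] x) hlt
  rcases lt_or_gt_of_ne hne with hij | hij
  · exact ⟨i, j, hij, Nat.lt_succ_iff.mp j.isLt, h⟩
  · exact ⟨j, i, hij, Nat.lt_succ_iff.mp i.isLt, h.symm⟩

lemma exists_iterate_isCyc [Fintype A] (σ : A → A) (x : A) :
    ∃ k ≤ Fintype.card A, IsCyc σ (σ^[k] x) := by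
  obtain ⟨i, j, hij, hj, h⟩ := exists_lt_iterate_eq σ x
  refine ⟨i, le_trans hij.le hj, j - i, by omega, ?_⟩
  rw [← Function.iterate_add_apply]
  have hji : j - i + i = j := by omega
  rw [hji, ← h]

lemma isCyc_of_mapsTo_injOn [Fintype A] (τ : A → A) (Z : Set A)
    (hM : ∀ x ∈ Z, τ x ∈ Z) (hI : ∀ x ∈ Z, ∀ y ∈ Z, τ x = τ y → x = y)
    {x : A} (hx : x ∈ Z) : IsCyc τ x := by
  have hiter : ∀ k, τ^[k] x ∈ Z := by
    intro k; induction k with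
    | zero => simpa using hx
    | succ k ih => rw [Function.iterate_succ_apply']; exact hM _ ih
  have hcancel : ∀ i : ℕ, ∀ u ∈ Z, ∀ v ∈ Z, τ^[i] u = τ^[i] v → u = v := by
    intro i
    induction i with
    | zero => intro u _ v _ h; simpa using h
    | succ i ih =>
      intro u hu v hv h
      rw [Function.iterate_succ_apply, Function.iterate_succ_apply] at h
      exact hI u hu v hv (ih _ (hM _ hu) _ (hM _ hv) h)
  obtain ⟨i, j, hij, _, h⟩ := exists_lt_iterate_eq τ x
  have hd : τ^[i] x = τ^[i] (τ^[j - i] x) := by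
    rw [← Function.iterate_add_apply]; rw [h]; congr 1; omega
  have := hcancel i x hx (τ^[j - i] x) (hiter _) hd
  exact ⟨j - i, by omega, this.symm⟩

lemma isCyc_comp_swap [Fintype A] [DecidableEq A] {σ : A → A} {a b : A}
    (ha : IsCyc σ a) (hb : IsCyc σ b) {x : A} (hx : IsCyc σ x) :
    IsCyc (σ ∘ Equiv.swap a b) x := by
  set Z : Set A := {y | IsCyc σ y} with hZ
  have hswap : ∀ y ∈ Z, (Equiv.swap a b) y ∈ Z := by
    intro y hy
    rcases eq_or_ne y a with rfl | hya
    · rw [Equiv.swap_apply_left]; exact hb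
    rcases eq_or_ne y b with rfl | hyb
    · rw [Equiv.swap_apply_right]; exact ha
    · rw [Equiv.swap_apply_of_ne_of_ne hya hyb]; exact hy
  refine isCyc_of_mapsTo_injOn _ Z ?_ ?_ hx
  · intro y hy; exact (hswap y hy).apply
  · intro u hu v hv h
    have := isCyc_injOn (hswap u hu) (hswap v hv) h
    exact (Equiv.swap a b).injective this

lemma isCyc_comp_swap_iff [Fintype A] [DecidableEq A] {σ : A → A} {a b : A}
    (ha : IsCyc σ a) (hb : IsCyc σ b) (x : A) :
    IsCyc (σ ∘ Equiv.swap a b) x ↔ IsCyc σ x := by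
  constructor
  · intro hx
    have ha' : IsCyc (σ ∘ Equiv.swap a b) a := isCyc_comp_swap ha hb ha
    have hb' : IsCyc (σ ∘ Equiv.swap a b) b := isCyc_comp_swap ha hb hb
    have := isCyc_comp_swap ha' hb' hx
    have hfun : ((σ ∘ Equiv.swap a b) ∘ Equiv.swap a b) = σ := by
      funext y; simp [Function.comp]
    rwa [hfun] at this
  · exact isCyc_comp_swap ha hb

lemma iterate_comp_shift {B : Type*} (α : A → B) (β : B → A) (m : ℕ) (x : A) :
    (α ∘ β)^[m] (α x) = α ((β ∘ α)^[m] x) := by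
  induction m generalizing x with
  | zero => simp
  | succ m ih =>
    rw [Function.iterate_succ_apply, Function.iterate_succ_apply]
    exact ih (β (α x))

lemma IsCyc.shift {B : Type*} {α : A → B} {β : B → A} {x : A}
    (h : IsCyc (β ∘ α) x) : IsCyc (α ∘ β) (α x) := by
  obtain ⟨m, hm, hx⟩ := h
  exact ⟨m, hm, by rw [iterate_comp_shift, hx]⟩

lemma fix_of_iterate_const {σ : A → A} {m : ℕ} {cst : A} (hm : ∀ x, σ^[m] x = cst) :
    σ cst = cst := by
  have h1 : σ^[m] (σ cst) = cst := hm _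
  have h2 : σ^[m] (σ cst) = σ (σ^[m] cst) := by
    rw [← Function.iterate_succ_apply, Function.iterate_succ_apply']
  rw [h2, hm cst] at h1; exact h1

lemma isCyc_eq_of_iterate_const {σ : A → A} {m : ℕ} {cst : A} (hm : ∀ x, σ^[m] x = cst)
    {x : A} (hx : IsCyc σ x) : x = cst := by
  obtain ⟨M, hMm, _, hMx⟩ := hx.exists_ge m
  have : σ^[M] x = cst := by
    have h : σ^[M] x = σ^[M - m] (σ^[m] x) := by
      rw [← Function.iterate_add_apply]; congr 1; omega
    rw [h, hm x, Function.iterate_fixed (fix_of_iterate_const hm)]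
  rw [hMx] at this; exact this

lemma ec_of_fix_unique [Fintype A] {σ : A → A} {c : A} (hfix : σ c = c)
    (huniq : ∀ x, IsCyc σ x → x = c) : ∃ m c', ∀ x, σ^[m] x = c' := by
  refine ⟨Fintype.card A, c, ?_⟩
  intro x
  obtain ⟨k, hk, hcyc⟩ := exists_iterate_isCyc σ x
  have hkc : σ^[k] x = c := huniq _ hcyc
  have : σ^[Fintype.card A] x = σ^[Fintype.card A - k] (σ^[k] x) := by
    rw [← Function.iterate_add_apply]; congr 1; omega
  rw [this, hkc, Function.iterate_fixed hfix]

lemma some_congr {S T : Set A} (h : S = T) (hS : S.Nonempty) (hT : T.Nonempty) :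
    hS.some = hT.some := by subst h; rfl

section Trip

variable {X₁ X₂ X₃ : Type*}

abbrev Tri (X₁ X₂ X₃ : Type*) := (X₁ → X₂) × (X₂ → X₃) × (X₃ → X₁)

def phi (t : Tri X₁ X₂ X₃) : X₁ → X₁ := t.2.2 ∘ t.2.1 ∘ t.1

def ut (t : Tri X₁ X₂ X₃) : X₃ → X₃ := (t.2.1 ∘ t.1) ∘ t.2.2

def EC (t : Tri X₁ X₂ X₃) : Prop := ∃ m c, ∀ x, (phi t)^[m] x = c

def CC (c : X₁ × X₂ × X₃) (t : Tri X₁ X₂ X₃) : Prop :=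
  t.1 c.1 = c.2.1 ∧ t.2.1 c.2.1 = c.2.2 ∧ t.2.2 c.2.2 = c.1

lemma CC.phi_fix {c : X₁ × X₂ × X₃} {t : Tri X₁ X₂ X₃} (h : CC c t) : phi t c.1 = c.1 := by
  simp only [phi, Function.comp_apply, h.1, h.2.1, h.2.2]

lemma CC.ut_fix {c : X₁ × X₂ × X₃} {t : Tri X₁ X₂ X₃} (h : CC c t) : ut t c.2.2 = c.2.2 := by
  simp only [ut, Function.comp_apply, h.1, h.2.1, h.2.2]

def Zset (c : X₁ × X₂ × X₃) (t : Tri X₁ X₂ X₃) : Set X₃ :=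
  {z | z ≠ c.2.2 ∧ IsCyc (ut t) z}

def surg (t : Tri X₁ X₂ X₃) [DecidableEq X₃] (a b : X₃) : Tri X₁ X₂ X₃ :=
  (t.1, t.2.1, t.2.2 ∘ (Equiv.swap a b))

lemma ut_surg (t : Tri X₁ X₂ X₃) [DecidableEq X₃] (a b : X₃) :
    ut (surg t a b) = ut t ∘ (Equiv.swap a b) := rfl

lemma CC.surg {c : X₁ × X₂ × X₃} {t : Tri X₁ X₂ X₃} [DecidableEq X₃] (h : CC c t)
    {a b : X₃} (ha : a ≠ c.2.2) (hb : b ≠ c.2.2) : CC c (Stmt19.surg t a b) := by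
  refine ⟨h.1, h.2.1, ?_⟩
  show t.2.2 (Equiv.swap a b c.2.2) = c.1
  rw [Equiv.swap_apply_of_ne_of_ne (Ne.symm ha) (Ne.symm hb)]
  exact h.2.2

variable [Fintype X₁] [Fintype X₂] [Fintype X₃]

lemma EC_iff_cyc {c : X₁ × X₂ × X₃} {t : Tri X₁ X₂ X₃} (hcc : CC c t) :
    EC t ↔ ∀ x, IsCyc (phi t) x → x = c.1 := by
  constructor
  · rintro ⟨m, c', hc'⟩
    intro x hx
    have h1 : x = c' := isCyc_eq_of_iterate_const hc' hx
    have h2 : c.1 = c' := isCyc_eq_of_iterate_const hc' ⟨1, le_refl 1, by simpa using hcc.phi_fix⟩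
    rw [h1, h2]
  · intro h
    exact ec_of_fix_unique hcc.phi_fix h

lemma not_EC_iff {c : X₁ × X₂ × X₃} {t : Tri X₁ X₂ X₃} (hcc : CC c t) :
    ¬ EC t ↔ (Zset c t).Nonempty := by
  rw [EC_iff_cyc hcc]
  push_neg
  constructor
  · rintro ⟨x, hx, hxc⟩
    refine ⟨(t.2.1 ∘ t.1) x, ?_, ?_⟩
    · intro h
      apply hxc
      have hphix : phi t x = c.1 := by
        show t.2.2 ((t.2.1 ∘ t.1) x) = c.1
        rw [h]; exact hcc.2.2
      exact hx.eq_of_apply_eq hcc.phi_fix hphix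
    · exact IsCyc.shift (α := t.2.1 ∘ t.1) (β := t.2.2) hx
  · rintro ⟨z, hz, hcyc⟩
    refine ⟨t.2.2 z, ?_, ?_⟩
    · exact IsCyc.shift (α := t.2.2) (β := t.2.1 ∘ t.1) hcyc
    · intro h
      apply hz
      have hutz : ut t z = c.2.2 := by
        show (t.2.1 ∘ t.1) (t.2.2 z) = c.2.2
        rw [h]
        show t.2.1 (t.1 c.1) = c.2.2
        rw [hcc.1]; exact hcc.2.1
      exact hcyc.eq_of_apply_eq hcc.ut_fix hutz

lemma Zset_surg {c : X₁ × X₂ × X₃} {t : Tri X₁ X₂ X₃} {a b : X₃}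
    (ha : a ∈ Zset c t) (hb : b ∈ Zset c t) :
    Zset c (Stmt19.surg t a b) = Zset c t := by
  ext z
  show z ≠ c.2.2 ∧ IsCyc (ut (Stmt19.surg t a b)) z ↔ z ≠ c.2.2 ∧ IsCyc (ut t) z
  rw [ut_surg, isCyc_comp_swap_iff ha.2 hb.2]

lemma y3_mem {c : X₁ × X₂ × X₃} {t : Tri X₁ X₂ X₃} (hcc : CC c t) {m : X₃}
    (hm : m ∈ Zset c t) : ut t m ∈ Zset c t := by
  refine ⟨?_, hm.2.apply⟩
  intro h
  exact hm.1 (hm.2.eq_of_apply_eq hcc.ut_fix h)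

lemma y1_ne {c : X₁ × X₂ × X₃} {t : Tri X₁ X₂ X₃} (hcc : CC c t) {m : X₃}
    (hm : m ∈ Zset c t) : t.2.2 m ≠ c.1 := by
  intro h
  apply (y3_mem hcc hm).1
  show (t.2.1 ∘ t.1) (t.2.2 m) = c.2.2
  rw [h]
  show t.2.1 (t.1 c.1) = c.2.2
  rw [hcc.1]; exact hcc.2.1

lemma y2_ne {c : X₁ × X₂ × X₃} {t : Tri X₁ X₂ X₃} (hcc : CC c t) {m : X₃}
    (hm : m ∈ Zset c t) : t.1 (t.2.2 m) ≠ c.2.1 := by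
  intro h
  apply (y3_mem hcc hm).1
  show t.2.1 (t.1 (t.2.2 m)) = c.2.2
  rw [h]; exact hcc.2.1


variable [Nonempty X₃]

noncomputable def mOf (c : X₁ × X₂ × X₃) (t : Tri X₁ X₂ X₃) : X₃ :=
  if h : (Zset c t).Nonempty then h.some else Classical.arbitrary X₃

lemma mOf_mem {c : X₁ × X₂ × X₃} {t : Tri X₁ X₂ X₃} (h : (Zset c t).Nonempty) :
    mOf c t ∈ Zset c t := by
  unfold mOf
  rw [dif_pos h]
  exact h.some_mem

lemma mOf_congr {c : X₁ × X₂ × X₃} {t t' : Tri X₁ X₂ X₃} (h : Zset c t = Zset c t') :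
    mOf c t = mOf c t' := by
  unfold mOf
  rw [h]

lemma surg_surg (t : Tri X₁ X₂ X₃) (a b a' : X₃) (h : a' = a) :
    Stmt19.surg (Stmt19.surg t a b) a' b = t := by
  rw [h]
  refine Prod.ext rfl (Prod.ext rfl ?_)
  show (t.2.2 ∘ (Equiv.swap a b)) ∘ (Equiv.swap a b) = t.2.2
  funext z
  simp

def NEC (c : X₁ × X₂ × X₃) := {t : Tri X₁ X₂ X₃ // CC c t ∧ ¬ EC t}

def Marked (c : X₁ × X₂ × X₃) :=
  {z : (({y : X₁ // y ≠ c.1}) × ({y : X₂ // y ≠ c.2.1}) × ({y : X₃ // y ≠ c.2.2}))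
      × Tri X₁ X₂ X₃ //
    CC c z.2 ∧ z.2.2.2 z.1.2.2.1 = z.1.1.1 ∧ z.2.1 z.1.1.1 = z.1.2.1.1 ∧
      z.2.2.1 z.1.2.1.1 = z.1.2.2.1}

noncomputable def fwd {c : X₁ × X₂ × X₃} (T : NEC c) : Marked c :=
  ⟨((⟨T.1.2.2 (mOf c T.1), y1_ne T.2.1 (mOf_mem ((not_EC_iff T.2.1).mp T.2.2))⟩,
     ⟨T.1.1 (T.1.2.2 (mOf c T.1)), y2_ne T.2.1 (mOf_mem ((not_EC_iff T.2.1).mp T.2.2))⟩,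
     ⟨ut T.1 (mOf c T.1), (y3_mem T.2.1 (mOf_mem ((not_EC_iff T.2.1).mp T.2.2))).1⟩),
    Stmt19.surg T.1 (mOf c T.1) (ut T.1 (mOf c T.1))),
   CC.surg T.2.1 (mOf_mem ((not_EC_iff T.2.1).mp T.2.2)).1
     (y3_mem T.2.1 (mOf_mem ((not_EC_iff T.2.1).mp T.2.2))).1,
   by show T.1.2.2 (Equiv.swap (mOf c T.1) (ut T.1 (mOf c T.1)) (ut T.1 (mOf c T.1)))
        = T.1.2.2 (mOf c T.1)
      rw [Equiv.swap_apply_right],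
   rfl, rfl⟩

lemma marked_y3_fix {c : X₁ × X₂ × X₃} (Z : Marked c) : ut Z.1.2 Z.1.1.2.2.1 = Z.1.1.2.2.1 := by
  show Z.1.2.2.1 (Z.1.2.1 (Z.1.2.2.2 Z.1.1.2.2.1)) = Z.1.1.2.2.1
  rw [Z.2.2.1, Z.2.2.2.1, Z.2.2.2.2]

lemma marked_y3_mem {c : X₁ × X₂ × X₃} (Z : Marked c) : Z.1.1.2.2.1 ∈ Zset c Z.1.2 :=
  ⟨Z.1.1.2.2.2, 1, le_refl 1, by simpa using marked_y3_fix Z⟩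

noncomputable def bwd {c : X₁ × X₂ × X₃} (Z : Marked c) : NEC c :=
  ⟨Stmt19.surg Z.1.2 (mOf c Z.1.2) Z.1.1.2.2.1,
   CC.surg Z.2.1 (mOf_mem ⟨_, marked_y3_mem Z⟩).1 Z.1.1.2.2.2,
   by rw [not_EC_iff (CC.surg Z.2.1 (mOf_mem ⟨_, marked_y3_mem Z⟩).1 Z.1.1.2.2.2)]
      exact ⟨Z.1.1.2.2.1,
        by rw [Zset_surg (mOf_mem ⟨_, marked_y3_mem Z⟩) (marked_y3_mem Z)]
           exact marked_y3_mem Z⟩⟩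

noncomputable def necEquivMarked (c : X₁ × X₂ × X₃) : NEC c ≃ Marked c where
  toFun := fwd
  invFun := bwd
  left_inv := by
    rintro ⟨t, hcc, hne⟩
    apply Subtype.ext
    have hZ : (Zset c t).Nonempty := (not_EC_iff hcc).mp hne
    have hmm : mOf c t ∈ Zset c t := mOf_mem hZ
    have hy3 : ut t (mOf c t) ∈ Zset c t := y3_mem hcc hmm
    have hsets : Zset c (Stmt19.surg t (mOf c t) (ut t (mOf c t))) = Zset c t :=
      Zset_surg hmm hy3
    show Stmt19.surg (Stmt19.surg t (mOf c t) (ut t (mOf c t)))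
        (mOf c (Stmt19.surg t (mOf c t) (ut t (mOf c t)))) (ut t (mOf c t)) = t
    exact surg_surg _ _ _ _ (mOf_congr hsets)
  right_inv := by
    rintro ⟨⟨⟨y₁, y₂, y₃⟩, t⟩, hcc, h1, h2, h3⟩
    have hy3fix : ut t y₃.1 = y₃.1 := by
      show t.2.1 (t.1 (t.2.2 y₃.1)) = y₃.1
      rw [h1, h2, h3]
    have hy3mem : y₃.1 ∈ Zset c t := ⟨y₃.2, 1, le_refl 1, by simpa using hy3fix⟩
    have hZ : (Zset c t).Nonempty := ⟨_, hy3mem⟩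
    have hmm : mOf c t ∈ Zset c t := mOf_mem hZ
    have hsets : Zset c (Stmt19.surg t (mOf c t) y₃.1) = Zset c t := Zset_surg hmm hy3mem
    have hm₁ : mOf c (Stmt19.surg t (mOf c t) y₃.1) = mOf c t := mOf_congr hsets
    have hut : ut (Stmt19.surg t (mOf c t) y₃.1) (mOf c (Stmt19.surg t (mOf c t) y₃.1))
        = y₃.1 := by
      rw [hm₁, ut_surg]
      show ut t (Equiv.swap (mOf c t) y₃.1 (mOf c t)) = y₃.1
      rw [Equiv.swap_apply_left, hy3fix]
    have hh : (Stmt19.surg t (mOf c t) y₃.1).2.2 (mOf c (Stmt19.surg t (mOf c t) y₃.1))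
        = y₁.1 := by
      rw [hm₁]
      show t.2.2 (Equiv.swap (mOf c t) y₃.1 (mOf c t)) = y₁.1
      rw [Equiv.swap_apply_left, h1]
    apply Subtype.ext
    show ((⟨_, _⟩, ⟨_, _⟩, ⟨_, _⟩), _) = ((y₁, y₂, y₃), t)
    refine Prod.ext (Prod.ext ?_ (Prod.ext ?_ ?_)) ?_
    · exact Subtype.ext hh
    · apply Subtype.ext
      show (Stmt19.surg t (mOf c t) y₃.1).1
          ((Stmt19.surg t (mOf c t) y₃.1).2.2 (mOf c (Stmt19.surg t (mOf c t) y₃.1))) = y₂.1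
      rw [hh]
      exact h2
    · exact Subtype.ext hut
    · show Stmt19.surg (Stmt19.surg t (mOf c t) y₃.1)
          (mOf c (Stmt19.surg t (mOf c t) y₃.1))
          (ut (Stmt19.surg t (mOf c t) y₃.1) (mOf c (Stmt19.surg t (mOf c t) y₃.1))) = t
      rw [hut]
      exact surg_surg _ _ _ _ hm₁


noncomputable def markedSigma (c : X₁ × X₂ × X₃) :
    Marked c ≃ Σ δ : (({y : X₁ // y ≠ c.1}) × ({y : X₂ // y ≠ c.2.1}) × ({y : X₃ // y ≠ c.2.2})),
      {t : Tri X₁ X₂ X₃ // CC c t ∧ t.2.2 δ.2.2.1 = δ.1.1 ∧ t.1 δ.1.1 = δ.2.1.1 ∧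
        t.2.1 δ.2.1.1 = δ.2.2.1} where
  toFun z := ⟨z.1.1, z.1.2, z.2⟩
  invFun w := ⟨(w.1, w.2.1), w.2.2⟩
  left_inv z := rfl
  right_inv w := rfl

end Trip

section Counting

variable {A B : Type*} [Fintype A] [Fintype B]

noncomputable def funOneEquiv (a : A) (b : B) :
    {f : A → B // f a = b} ≃ ({x : A // x ≠ a} → B) where
  toFun f := fun x => f.1 x.1
  invFun u := ⟨fun x => if h : x = a then b else u ⟨x, h⟩, by simp⟩
  left_inv := by
    rintro ⟨f, hf⟩
    ext x
    by_cases h : x = a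
    · subst h; simp [hf]
    · simp [h]
  right_inv := by
    intro u
    funext x
    simp [x.2]

noncomputable def funTwoEquiv (a a' : A) (b b' : B) (h : a ≠ a') :
    {f : A → B // f a = b ∧ f a' = b'} ≃ ({x : A // x ≠ a ∧ x ≠ a'} → B) where
  toFun f := fun x => f.1 x.1
  invFun u := ⟨fun x => if hx : x = a then b else if hx' : x = a' then b' else u ⟨x, ⟨hx, hx'⟩⟩,
    by constructor <;> simp [h, h.symm]⟩
  left_inv := by
    rintro ⟨f, hf, hf'⟩
    ext x
    by_cases hx : x = a
    · subst hx; simp [hf]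
    · by_cases hx' : x = a'
      · subst hx'; simp [hf', hx]
      · simp [hx, hx']
  right_inv := by
    intro u
    funext x
    simp [x.2.1, x.2.2]

lemma card_ne (a : A) : Nat.card {x : A // x ≠ a} = Fintype.card A - 1 := by
  rw [Nat.card_eq_fintype_card]
  have : Fintype.card {x : A // ¬ (x = a)} = Fintype.card A - Fintype.card {x : A // x = a} :=
    Fintype.card_subtype_compl _
  simpa [Fintype.card_subtype_eq] using this

lemma card_ne_ne (a a' : A) (h : a ≠ a') :
    Nat.card {x : A // x ≠ a ∧ x ≠ a'} = Fintype.card A - 2 := by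
  rw [Nat.card_eq_fintype_card]
  have e : {x : A // x ≠ a ∧ x ≠ a'} ≃ {x : A // ¬ (x = a ∨ x = a')} :=
    Equiv.subtypeEquivRight (by intro x; tauto)
  rw [Fintype.card_congr e, Fintype.card_subtype_compl]
  have : Fintype.card {x : A // x = a ∨ x = a'} = 2 := by
    rw [Fintype.card_subtype]
    have : (Finset.univ.filter fun x : A => x = a ∨ x = a') = {a, a'} := by
      ext x; simp
    rw [this, Finset.card_insert_of_notMem (by simpa using h), Finset.card_singleton]
  rw [this]

lemma card_fun_one (a : A) (b : B) :
    Nat.card {f : A → B // f a = b} = Fintype.card B ^ (Fintype.card A - 1) := by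
  rw [Nat.card_congr (funOneEquiv a b), Nat.card_eq_fintype_card, Fintype.card_fun]
  congr 1
  have := card_ne a
  rwa [Nat.card_eq_fintype_card] at this

lemma card_fun_two (a a' : A) (b b' : B) (h : a ≠ a') :
    Nat.card {f : A → B // f a = b ∧ f a' = b'} = Fintype.card B ^ (Fintype.card A - 2) := by
  rw [Nat.card_congr (funTwoEquiv a a' b b' h), Nat.card_eq_fintype_card, Fintype.card_fun]
  congr 1
  have := card_ne_ne a a' h
  rwa [Nat.card_eq_fintype_card] at this

lemma nat_card_sigma {ι : Type*} [Fintype ι] (F : ι → Type*) [∀ i, Fintype (F i)] :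
    Nat.card (Σ i, F i) = ∑ i, Nat.card (F i) := by
  rw [Nat.card_eq_fintype_card, Fintype.card_sigma]
  simp [Nat.card_eq_fintype_card]

noncomputable def tripleSplit {C : Type*} (P : A → Prop) (Q : B → Prop) (R : C → Prop) :
    {x : A × B × C // P x.1 ∧ Q x.2.1 ∧ R x.2.2} ≃ {a // P a} × {b // Q b} × {c // R c} where
  toFun x := (⟨x.1.1, x.2.1⟩, ⟨x.1.2.1, x.2.2.1⟩, ⟨x.1.2.2, x.2.2.2⟩)
  invFun y := ⟨(y.1.1, y.2.1.1, y.2.2.1), y.1.2, y.2.1.2, y.2.2.2⟩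
  left_inv := by rintro ⟨⟨a, b, c⟩, h⟩; rfl
  right_inv := by rintro ⟨⟨a, ha⟩, ⟨b, hb⟩, ⟨c, hc⟩⟩; rfl

lemma card_split (P Q : A → Prop) :
    Nat.card {x // P x} = Nat.card {x // P x ∧ Q x} + Nat.card {x // P x ∧ ¬ Q x} := by
  rw [← Nat.card_sum]
  apply Nat.card_congr
  exact (Equiv.sumCompl fun y : {x // P x} => Q y.1).symm.trans
    (Equiv.sumCongr (Equiv.subtypeSubtypeEquivSubtypeInter P Q)
      (Equiv.subtypeSubtypeEquivSubtypeInter P (fun x => ¬ Q x)))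

end Counting

section Final

variable {X₁ X₂ X₃ : Type*} [Fintype X₁] [Fintype X₂] [Fintype X₃] [Nonempty X₃]

lemma card_cc (c : X₁ × X₂ × X₃) :
    Nat.card {t : Tri X₁ X₂ X₃ // CC c t} =
      Fintype.card X₂ ^ (Fintype.card X₁ - 1) *
        (Fintype.card X₃ ^ (Fintype.card X₂ - 1) *
          Fintype.card X₁ ^ (Fintype.card X₃ - 1)) := by
  have e := tripleSplit (fun f : X₁ → X₂ => f c.1 = c.2.1)
    (fun g : X₂ → X₃ => g c.2.1 = c.2.2) (fun h : X₃ → X₁ => h c.2.2 = c.1)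
  refine Eq.trans (Nat.card_congr e) ?_
  rw [Nat.card_prod, Nat.card_prod, card_fun_one, card_fun_one, card_fun_one]

lemma card_marked (c : X₁ × X₂ × X₃) :
    Nat.card (Marked c) =
      (Fintype.card X₁ - 1) * ((Fintype.card X₂ - 1) * (Fintype.card X₃ - 1)) *
        (Fintype.card X₂ ^ (Fintype.card X₁ - 2) *
          (Fintype.card X₃ ^ (Fintype.card X₂ - 2) *
            Fintype.card X₁ ^ (Fintype.card X₃ - 2))) := by
  rw [Nat.card_congr (markedSigma c), nat_card_sigma]
  have hfib : ∀ δ : (({y : X₁ // y ≠ c.1}) × ({y : X₂ // y ≠ c.2.1}) × ({y : X₃ // y ≠ c.2.2})),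
      Nat.card {t : Tri X₁ X₂ X₃ // CC c t ∧ t.2.2 δ.2.2.1 = δ.1.1 ∧ t.1 δ.1.1 = δ.2.1.1 ∧
        t.2.1 δ.2.1.1 = δ.2.2.1} =
      Fintype.card X₂ ^ (Fintype.card X₁ - 2) *
        (Fintype.card X₃ ^ (Fintype.card X₂ - 2) *
          Fintype.card X₁ ^ (Fintype.card X₃ - 2)) := by
    intro δ
    have hre : ∀ t : Tri X₁ X₂ X₃,
        (CC c t ∧ t.2.2 δ.2.2.1 = δ.1.1 ∧ t.1 δ.1.1 = δ.2.1.1 ∧ t.2.1 δ.2.1.1 = δ.2.2.1) ↔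
        ((t.1 c.1 = c.2.1 ∧ t.1 δ.1.1 = δ.2.1.1) ∧
         (t.2.1 c.2.1 = c.2.2 ∧ t.2.1 δ.2.1.1 = δ.2.2.1) ∧
         (t.2.2 c.2.2 = c.1 ∧ t.2.2 δ.2.2.1 = δ.1.1)) := by
      intro t; unfold CC; tauto
    have e := tripleSplit (fun f : X₁ → X₂ => f c.1 = c.2.1 ∧ f δ.1.1 = δ.2.1.1)
      (fun g : X₂ → X₃ => g c.2.1 = c.2.2 ∧ g δ.2.1.1 = δ.2.2.1)
      (fun h : X₃ → X₁ => h c.2.2 = c.1 ∧ h δ.2.2.1 = δ.1.1)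
    rw [Nat.card_congr ((Equiv.subtypeEquivRight hre).trans e), Nat.card_prod, Nat.card_prod,
      card_fun_two _ _ _ _ (Ne.symm δ.1.2), card_fun_two _ _ _ _ (Ne.symm δ.2.1.2),
      card_fun_two _ _ _ _ (Ne.symm δ.2.2.2)]
  rw [Finset.sum_congr rfl (fun δ _ => hfib δ), Finset.sum_const, Finset.card_univ,
    smul_eq_mul]
  congr 1
  rw [← Nat.card_eq_fintype_card, Nat.card_prod, Nat.card_prod, card_ne, card_ne, card_ne]

noncomputable def cOf : {t : Tri X₁ X₂ X₃ // EC t} → X₁ × X₂ × X₃ := fun T =>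
  (T.2.choose_spec.choose, T.1.1 T.2.choose_spec.choose,
    T.1.2.1 (T.1.1 T.2.choose_spec.choose))

lemma cOf_eq_iff (T : {t : Tri X₁ X₂ X₃ // EC t}) (c : X₁ × X₂ × X₃) :
    cOf T = c ↔ CC c T.1 := by
  have hspec : ∀ x, (phi T.1)^[T.2.choose] x = T.2.choose_spec.choose :=
    T.2.choose_spec.choose_spec
  constructor
  · rintro rfl
    refine ⟨rfl, rfl, ?_⟩
    show phi T.1 T.2.choose_spec.choose = T.2.choose_spec.choose
    exact fix_of_iterate_const hspec
  · intro hcc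
    have h1 : c.1 = T.2.choose_spec.choose :=
      isCyc_eq_of_iterate_const hspec ⟨1, le_refl 1, by simpa using hcc.phi_fix⟩
    refine Prod.ext h1.symm (Prod.ext ?_ ?_)
    · show T.1.1 T.2.choose_spec.choose = c.2.1
      rw [← h1]; exact hcc.1
    · show T.1.2.1 (T.1.1 T.2.choose_spec.choose) = c.2.2
      rw [← h1, hcc.1]; exact hcc.2.1

noncomputable def ecSigma : {t : Tri X₁ X₂ X₃ // EC t} ≃
    Σ c : X₁ × X₂ × X₃, {t : Tri X₁ X₂ X₃ // CC c t ∧ EC t} :=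
  (Equiv.sigmaFiberEquiv cOf).symm.trans (Equiv.sigmaCongrRight (fun c =>
    { toFun := fun W => ⟨W.1.1, (cOf_eq_iff W.1 c).mp W.2, W.1.2⟩
      invFun := fun w => ⟨⟨w.1, w.2.2⟩, (cOf_eq_iff _ c).mpr w.2.1⟩
      left_inv := by rintro ⟨⟨t, h⟩, hc⟩; rfl
      right_inv := by rintro ⟨t, hcc, h⟩; rfl }))

lemma card_ec_total :
    Nat.card {t : Tri X₁ X₂ X₃ // EC t} =
      Fintype.card X₁ * Fintype.card X₂ * Fintype.card X₃ *
        (Fintype.card X₂ ^ (Fintype.card X₁ - 1) *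
          (Fintype.card X₃ ^ (Fintype.card X₂ - 1) *
            Fintype.card X₁ ^ (Fintype.card X₃ - 1)) -
         (Fintype.card X₁ - 1) * ((Fintype.card X₂ - 1) * (Fintype.card X₃ - 1)) *
          (Fintype.card X₂ ^ (Fintype.card X₁ - 2) *
            (Fintype.card X₃ ^ (Fintype.card X₂ - 2) *
              Fintype.card X₁ ^ (Fintype.card X₃ - 2)))) := by
  rw [Nat.card_congr (ecSigma (X₁ := X₁) (X₂ := X₂) (X₃ := X₃)), nat_card_sigma]
  have hc : ∀ c : X₁ × X₂ × X₃,
      Nat.card {t : Tri X₁ X₂ X₃ // CC c t ∧ EC t} =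
        Fintype.card X₂ ^ (Fintype.card X₁ - 1) *
          (Fintype.card X₃ ^ (Fintype.card X₂ - 1) *
            Fintype.card X₁ ^ (Fintype.card X₃ - 1)) -
        (Fintype.card X₁ - 1) * ((Fintype.card X₂ - 1) * (Fintype.card X₃ - 1)) *
          (Fintype.card X₂ ^ (Fintype.card X₁ - 2) *
            (Fintype.card X₃ ^ (Fintype.card X₂ - 2) *
              Fintype.card X₁ ^ (Fintype.card X₃ - 2))) := by
    intro c
    have hsplit := card_split (fun t : Tri X₁ X₂ X₃ => CC c t) (fun t => EC t)
    have hnec : Nat.card {t : Tri X₁ X₂ X₃ // CC c t ∧ ¬ EC t} = Nat.card (Marked c) :=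
      Nat.card_congr (necEquivMarked c)
    rw [card_cc] at hsplit
    rw [hnec, card_marked] at hsplit
    omega
  rw [Finset.sum_congr rfl (fun c _ => hc c), Finset.sum_const, Finset.card_univ,
    smul_eq_mul]
  rw [show Fintype.card (X₁ × X₂ × X₃) =
    Fintype.card X₁ * Fintype.card X₂ * Fintype.card X₃ from by
      simp [Fintype.card_prod, mul_assoc]]

end Final

end Stmt19


lemma sigma_fact (n₁ n₂ n₃ : ℕ) (h₁ : 1 ≤ n₁) (h₂ : 1 ≤ n₂) (h₃ : 1 ≤ n₃) :
    n₁ * n₂ * n₃ - (n₁ - 1) * ((n₂ - 1) * (n₃ - 1))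
      = n₁ * n₂ + n₂ * n₃ + n₃ * n₁ - (n₁ + n₂ + n₃) + 1 := by
  obtain ⟨a, rfl⟩ : ∃ a, n₁ = a + 1 := ⟨n₁ - 1, by omega⟩
  obtain ⟨b, rfl⟩ : ∃ b, n₂ = b + 1 := ⟨n₂ - 1, by omega⟩
  obtain ⟨c, rfl⟩ : ∃ c, n₃ = c + 1 := ⟨n₃ - 1, by omega⟩
  simp only [Nat.add_sub_cancel]
  have e1 : (a+1) * (b+1) * (c+1) = a*(b*c) + (a*b + b*c + c*a + a + b + c + 1) := by ring
  have e2 : (a+1)*(b+1) + (b+1)*(c+1) + (c+1)*(a+1) = (a*b + b*c + c*a) + 2*(a+b+c) + 3 := by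
    ring
  rw [e1, e2]
  omega

lemma final_arith (n₁ n₂ n₃ : ℕ) (h₁ : 1 ≤ n₁) (h₂ : 1 ≤ n₂) (h₃ : 1 ≤ n₃) :
    n₁ * n₂ * n₃ *
        (n₂^(n₁-1) * (n₃^(n₂-1) * n₁^(n₃-1)) -
          (n₁-1) * ((n₂-1) * (n₃-1)) * (n₂^(n₁-2) * (n₃^(n₂-2) * n₁^(n₃-2))))
      = n₁ ^ (n₃ - 1) * n₂ ^ (n₁ - 1) * n₃ ^ (n₂ - 1) *
        (n₁ * n₂ + n₂ * n₃ + n₃ * n₁ - (n₁ + n₂ + n₃) + 1) := by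
  rcases Nat.lt_or_ge n₁ 2 with hn₁ | hn₁
  · have : n₁ = 1 := by omega
    subst this
    have key : n₂ + n₂ * n₃ + n₃ - (1 + n₂ + n₃) + 1 = n₂ * n₃ := by
      have hle : n₂ ≤ n₂ * n₃ := Nat.le_mul_of_pos_right _ (by omega)
      omega
    simp only [Nat.sub_self, pow_zero, one_mul, mul_one, one_pow, Nat.zero_mul, zero_mul,
      Nat.sub_zero, key]
    ring
  rcases Nat.lt_or_ge n₂ 2 with hn₂ | hn₂
  · have : n₂ = 1 := by omega
    subst this
    have key : n₁ + n₃ + n₃ * n₁ - (n₁ + 1 + n₃) + 1 = n₃ * n₁ := by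
      have hle : n₁ ≤ n₃ * n₁ := Nat.le_mul_of_pos_left _ (by omega)
      omega
    simp only [Nat.sub_self, pow_zero, one_mul, mul_one, one_pow, Nat.zero_mul, zero_mul,
      Nat.sub_zero, mul_zero]
    rw [key]; ring
  rcases Nat.lt_or_ge n₃ 2 with hn₃ | hn₃
  · have : n₃ = 1 := by omega
    subst this
    have key : n₁ * n₂ + n₂ + n₁ - (n₁ + n₂ + 1) + 1 = n₁ * n₂ := by
      have hle : n₁ ≤ n₁ * n₂ := Nat.le_mul_of_pos_right _ (by omega)
      omega
    simp only [Nat.sub_self, pow_zero, one_mul, mul_one, one_pow, Nat.zero_mul, zero_mul,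
      Nat.sub_zero, mul_zero, key]
    ring
  · -- all ≥ 2
    have e₂ : n₂ ^ (n₁ - 1) = n₂ * n₂ ^ (n₁ - 2) := by
      rw [← pow_succ']; congr 1; omega
    have e₃ : n₃ ^ (n₂ - 1) = n₃ * n₃ ^ (n₂ - 2) := by
      rw [← pow_succ']; congr 1; omega
    have e₁ : n₁ ^ (n₃ - 1) = n₁ * n₁ ^ (n₃ - 2) := by
      rw [← pow_succ']; congr 1; omega
    set P := n₂ ^ (n₁ - 2)
    set Q := n₃ ^ (n₂ - 2)
    set R := n₁ ^ (n₃ - 2)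
    set A := (n₁-1) * ((n₂-1) * (n₃-1)) with hA
    set C := n₁ * n₂ * n₃ with hC
    rw [e₁, e₂, e₃, ← sigma_fact n₁ n₂ n₃ h₁ h₂ h₃]
    have l1 : n₂ * P * (n₃ * Q * (n₁ * R)) = (P * (Q * R)) * C := by rw [hC]; ring
    have l2 : A * (P * (Q * R)) = (P * (Q * R)) * A := by ring
    rw [l1, l2, ← Nat.mul_sub]
    have l3 : ∀ D : ℕ, C * (P * (Q * R) * D) = n₁ * R * (n₂ * P) * (n₃ * Q) * D := by
      intro D; rw [hC]; ring
    exact l3 (C - A)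




/-- For pairwise disjoint finite sets `X₁, X₂, X₃` of cardinalities `n₁, n₂, n₃ ≥ 1`,
the number of eventually constant triples `(f, g, h)` (with `f : X₁ → X₂`,
`g : X₂ → X₃`, `h : X₃ → X₁` such that some iterate `(h ∘ g ∘ f)^[m]` is a constant
map) equals `n₁^(n₃−1) · n₂^(n₁−1) · n₃^(n₂−1) · (n₁n₂ + n₂n₃ + n₃n₁ − (n₁+n₂+n₃) + 1)`. -/
theorem stmt19 (X₁ X₂ X₃ : Type*) [Fintype X₁] [Fintype X₂] [Fintype X₃]
    (n₁ n₂ n₃ : ℕ) (h₁ : Fintype.card X₁ = n₁) (h₂ : Fintype.card X₂ = n₂)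
    (h₃ : Fintype.card X₃ = n₃) (hn₁ : 1 ≤ n₁) (hn₂ : 1 ≤ n₂) (hn₃ : 1 ≤ n₃) :
    Nat.card {t : (X₁ → X₂) × (X₂ → X₃) × (X₃ → X₁) //
        ∃ (m : ℕ) (c : X₁), ∀ x : X₁, (t.2.2 ∘ t.2.1 ∘ t.1)^[m] x = c} =
      n₁ ^ (n₃ - 1) * n₂ ^ (n₁ - 1) * n₃ ^ (n₂ - 1) *
        (n₁ * n₂ + n₂ * n₃ + n₃ * n₁ - (n₁ + n₂ + n₃) + 1) := by
  haveI : Nonempty X₃ := Fintype.card_pos_iff.mp (by rw [h₃]; omega)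
  have key := Stmt19.card_ec_total (X₁ := X₁) (X₂ := X₂) (X₃ := X₃)
  rw [h₁, h₂, h₃] at key
  exact key.trans (final_arith n₁ n₂ n₃ hn₁ hn₂ hn₃)
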